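/- arXiv:2506.00976 — 2 statements merged into one kernel-verified Lean document; each statement's English description precedes it below -/
import Mathlib

section
/- Let μ, ν be discrete probability measures on finite sets X, Y partitioned into blocks with positive block masses, let μ̃, ν̃ be the coarsened measures, and let C̄ be the marginally weighted coarse cost C̄_{kℓ} = (1/(μ(X_k)ν(Y_ℓ))) Σ_{x∈X_k, y∈Y_ℓ} ρ(x,y)^p μ(x)ν(y). Then the coarse optimal transport cost upper-bounds the fine one: L_{C̄}(μ̃, ν̃) ≥ L_C(μ, ν), where C_{xy} = ρ(x,y)^p. Consequently L_{C̄}(μ̃, ν̃)^{1/p} ≥ W_p(μ, ν). -/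
open Finset

def IsCoupling {X Y : Type*} [Fintype X] [Fintype Y]
    (π : X → Y → ℝ) (μ : X → ℝ) (ν : Y → ℝ) : Prop :=
  (∀ i j, 0 ≤ π i j) ∧ (∀ i, ∑ j, π i j = μ i) ∧ (∀ j, ∑ i, π i j = ν j)

def transportCost {X Y : Type*} [Fintype X] [Fintype Y]
    (π : X → Y → ℝ) (C : X → Y → ℝ) : ℝ :=
  ∑ i, ∑ j, π i j * C i j

noncomputable def OTCost {X Y : Type*} [Fintype X] [Fintype Y]
    (C : X → Y → ℝ) (μ : X → ℝ) (ν : Y → ℝ) : ℝ :=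
  sInf {t : ℝ | ∃ π, IsCoupling π μ ν ∧ t = transportCost π C}

theorem weighted_cost_upper_bound
    {Z : Type*} [MetricSpace Z]
    {X Y : Type*} [Fintype X] [Fintype Y] {K L : ℕ}
    (ι : X → Z) (γ : Y → Z) (p : ℝ) (hp : 1 ≤ p)
    (kf : X → Fin K) (lf : Y → Fin L)
    (μ : X → ℝ) (ν : Y → ℝ)
    (hμ : (∀ x, 0 ≤ μ x) ∧ ∑ x, μ x = 1)
    (hν : (∀ y, 0 ≤ ν y) ∧ ∑ y, ν y = 1)
    (μt : Fin K → ℝ) (νt : Fin L → ℝ)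
    (hμt : ∀ k, μt k = ∑ x ∈ Finset.univ.filter (fun x => kf x = k), μ x)
    (hνt : ∀ l, νt l = ∑ y ∈ Finset.univ.filter (fun y => lf y = l), ν y)
    (hμtpos : ∀ k, 0 < μt k) (hνtpos : ∀ l, 0 < νt l)
    (Cbar : Fin K → Fin L → ℝ)
    (hCbar : ∀ k l, Cbar k l = (1 / (μt k * νt l)) *
      ∑ x ∈ Finset.univ.filter (fun x => kf x = k),
        ∑ y ∈ Finset.univ.filter (fun y => lf y = l),
          dist (ι x) (γ y) ^ p * μ x * ν y) :
    OTCost (fun x y => dist (ι x) (γ y) ^ p) μ ν ≤ OTCost Cbar μt νt ∧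
      (OTCost (fun x y => dist (ι x) (γ y) ^ p) μ ν) ^ (1 / p)
        ≤ (OTCost Cbar μt νt) ^ (1 / p) := by

  obtain ⟨hμ0, hμ1⟩ := hμ
  obtain ⟨hν0, hν1⟩ := hν
  have hsumμt : ∑ k, μt k = 1 := by
    simp only [hμt]
    rw [Finset.sum_fiberwise univ kf μ]; exact hμ1
  have hsumνt : ∑ l, νt l = 1 := by
    simp only [hνt]
    rw [Finset.sum_fiberwise univ lf ν]; exact hν1
  -- every coarse cost is also a fine cost
  have hsub : {t : ℝ | ∃ π, IsCoupling π μt νt ∧ t = transportCost π Cbar} ⊆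
      {t : ℝ | ∃ π, IsCoupling π μ ν ∧ t = transportCost π (fun x y => dist (ι x) (γ y) ^ p)} := by
    rintro t ⟨πt, ⟨hπ0, hπr, hπc⟩, rfl⟩
    refine ⟨fun x y => πt (kf x) (lf y) * μ x * ν y / (μt (kf x) * νt (lf y)), ⟨?_, ?_, ?_⟩, ?_⟩
    · intro i j
      apply div_nonneg
      · exact mul_nonneg (mul_nonneg (hπ0 _ _) (hμ0 i)) (hν0 j)
      · exact le_of_lt (mul_pos (hμtpos _) (hνtpos _))
    · intro i
      have h1 : ∀ j : Y, πt (kf i) (lf j) * μ i * ν j / (μt (kf i) * νt (lf j))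
          = (μ i / μt (kf i)) * (πt (kf i) (lf j) / νt (lf j) * ν j) := by
        intro j; field_simp
      simp only [h1]
      rw [← Finset.mul_sum, ← Finset.sum_fiberwise univ lf
        (fun j => πt (kf i) (lf j) / νt (lf j) * ν j)]
      have h2 : ∀ l : Fin L, ∑ j ∈ univ.filter (fun j => lf j = l),
          πt (kf i) (lf j) / νt (lf j) * ν j = πt (kf i) l := by
        intro l
        have : ∀ j ∈ univ.filter (fun j => lf j = l),
            πt (kf i) (lf j) / νt (lf j) * ν j = πt (kf i) l / νt l * ν j := by
          intro j hj
          simp only [mem_filter] at hj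
          rw [hj.2]
        rw [Finset.sum_congr rfl this, ← Finset.mul_sum, ← hνt l]
        rw [div_mul_eq_mul_div, mul_div_assoc, div_self (hνtpos l).ne', mul_one]
      rw [Finset.sum_congr rfl (fun l _ => h2 l), hπr (kf i)]
      rw [div_mul_eq_mul_div, div_eq_iff (hμtpos (kf i)).ne']
    · intro j
      have h1 : ∀ i : X, πt (kf i) (lf j) * μ i * ν j / (μt (kf i) * νt (lf j))
          = (ν j / νt (lf j)) * (πt (kf i) (lf j) / μt (kf i) * μ i) := by
        intro i; field_simp
      simp only [h1]
      rw [← Finset.mul_sum, ← Finset.sum_fiberwise univ kf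
        (fun i => πt (kf i) (lf j) / μt (kf i) * μ i)]
      have h2 : ∀ k : Fin K, ∑ i ∈ univ.filter (fun i => kf i = k),
          πt (kf i) (lf j) / μt (kf i) * μ i = πt k (lf j) := by
        intro k
        have : ∀ i ∈ univ.filter (fun i => kf i = k),
            πt (kf i) (lf j) / μt (kf i) * μ i = πt k (lf j) / μt k * μ i := by
          intro i hi
          simp only [mem_filter] at hi
          rw [hi.2]
        rw [Finset.sum_congr rfl this, ← Finset.mul_sum, ← hμt k]
        rw [div_mul_eq_mul_div, mul_div_assoc, div_self (hμtpos k).ne', mul_one]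
      rw [Finset.sum_congr rfl (fun k _ => h2 k), hπc (lf j)]
      rw [div_mul_eq_mul_div, div_eq_iff (hνtpos (lf j)).ne']
    · unfold transportCost
      rw [← Finset.sum_fiberwise univ kf
        (fun i => ∑ j, πt (kf i) (lf j) * μ i * ν j / (μt (kf i) * νt (lf j))
          * dist (ι i) (γ j) ^ p)]
      refine Finset.sum_congr rfl fun k _ => ?_
      have hk : ∀ i ∈ univ.filter (fun i => kf i = k),
          (∑ j, πt (kf i) (lf j) * μ i * ν j / (μt (kf i) * νt (lf j))
            * dist (ι i) (γ j) ^ p)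
          = ∑ j, πt k (lf j) * μ i * ν j / (μt k * νt (lf j)) * dist (ι i) (γ j) ^ p := by
        intro i hi
        simp only [mem_filter] at hi
        rw [hi.2]
      rw [Finset.sum_congr rfl hk]
      have hswap : ∀ i : X, (∑ j, πt k (lf j) * μ i * ν j / (μt k * νt (lf j))
          * dist (ι i) (γ j) ^ p)
          = ∑ l, ∑ j ∈ univ.filter (fun j => lf j = l),
            πt k (lf j) * μ i * ν j / (μt k * νt (lf j)) * dist (ι i) (γ j) ^ p := by
        intro i
        rw [Finset.sum_fiberwise univ lf]
      rw [Finset.sum_congr rfl (fun i _ => hswap i), Finset.sum_comm]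
      refine Finset.sum_congr rfl fun l _ => ?_
      rw [hCbar k l]
      have hterm : ∀ i ∈ univ.filter (fun i => kf i = k),
          (∑ j ∈ univ.filter (fun j => lf j = l),
            πt k (lf j) * μ i * ν j / (μt k * νt (lf j)) * dist (ι i) (γ j) ^ p)
          = ∑ j ∈ univ.filter (fun j => lf j = l),
            (πt k l / (μt k * νt l)) * (dist (ι i) (γ j) ^ p * μ i * ν j) := by
        intro i hi
        refine Finset.sum_congr rfl fun j hj => ?_
        simp only [mem_filter] at hj
        rw [hj.2]; ring
      rw [Finset.sum_congr rfl hterm]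
      simp only [← Finset.mul_sum]
      ring
  -- coarse set is nonempty (product coupling)
  have hne : {t : ℝ | ∃ π, IsCoupling π μt νt ∧ t = transportCost π Cbar}.Nonempty := by
    refine ⟨transportCost (fun k l => μt k * νt l) Cbar, fun k l => μt k * νt l, ⟨?_, ?_, ?_⟩, rfl⟩
    · intro k l; exact mul_nonneg (hμtpos k).le (hνtpos l).le
    · intro k; rw [← Finset.mul_sum, hsumνt, mul_one]
    · intro l; rw [← Finset.sum_mul, hsumμt, one_mul]
  -- fine set bounded below by 0
  have hbdd : ∀ t ∈ {t : ℝ | ∃ π, IsCoupling π μ ν ∧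
      t = transportCost π (fun x y => dist (ι x) (γ y) ^ p)}, (0:ℝ) ≤ t := by
    rintro t ⟨π, ⟨hπ0, _, _⟩, rfl⟩
    apply Finset.sum_nonneg; intro i _
    apply Finset.sum_nonneg; intro j _
    exact mul_nonneg (hπ0 i j) (Real.rpow_nonneg dist_nonneg p)
  have hmain : OTCost (fun x y => dist (ι x) (γ y) ^ p) μ ν ≤ OTCost Cbar μt νt := by
    apply csInf_le_csInf _ hne hsub
    exact ⟨0, fun t ht => hbdd t ht⟩
  refine ⟨hmain, ?_⟩
  apply Real.rpow_le_rpow _ hmain (by positivity)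
  exact Real.sInf_nonneg hbdd
end

section
/- Combined coarse-to-fine upper bound: let μ, ν be probability measures on a finite metric space X, let π̂ be any nonnegative matrix with Σ_{ij} π̂_{ij} = 1 and marginals μ̂ = π̂ 1, ν̂ = π̂^⊤ 1. Then W_p(μ,ν) ≤ ⟨π̂, C⟩^{1/p} + 2^{1-1/p}⟨w, |μ̂-μ|⟩^{1/p} + 2^{1-1/p}⟨w, |ν-ν̂|⟩^{1/p}, where C_{ij} = ρ(x_i,x_j)^p and w_i = ρ(x̄, x_i)^p for a fixed x̄ ∈ X. -/
open Finset

noncomputable def Wp {X : Type*} [Fintype X] [MetricSpace X]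
    (p : ℝ) (μ ν : X → ℝ) : ℝ :=
  (OTCost (fun x y => dist x y ^ p) μ ν) ^ (1 / p)

lemma two_pow_bound (p : ℝ) (hp : 1 ≤ p) {a b : ℝ} (ha : 0 ≤ a) (hb : 0 ≤ b) :
    (a + b) ^ p ≤ 2 ^ (p - 1) * (a ^ p + b ^ p) := by
  have h := Real.rpow_sum_le_const_mul_sum_rpow_of_nonneg (s := (Finset.univ : Finset (Fin 2)))
    (f := ![a, b]) hp (by intro i _; fin_cases i <;> simpa)
  simpa [Fin.sum_univ_two] using h

lemma transportCost_nonneg {X Y : Type*} [Fintype X] [Fintype Y]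
    {π : X → Y → ℝ} {C : X → Y → ℝ} (hπ : ∀ i j, 0 ≤ π i j) (hC : ∀ i j, 0 ≤ C i j) :
    0 ≤ transportCost π C :=
  Finset.sum_nonneg fun i _ => Finset.sum_nonneg fun j _ => mul_nonneg (hπ i j) (hC i j)

lemma OTCost_le {X Y : Type*} [Fintype X] [Fintype Y] {C : X → Y → ℝ}
    (hC : ∀ i j, 0 ≤ C i j) {μ : X → ℝ} {ν : Y → ℝ} {π : X → Y → ℝ}
    (h : IsCoupling π μ ν) : OTCost C μ ν ≤ transportCost π C := by
  apply csInf_le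
  · refine ⟨0, ?_⟩
    rintro t ⟨π', hπ', rfl⟩
    exact transportCost_nonneg hπ'.1 hC
  · exact ⟨π, h, rfl⟩

lemma OTCost_nonneg {X Y : Type*} [Fintype X] [Fintype Y] {C : X → Y → ℝ}
    (hC : ∀ i j, 0 ≤ C i j) {μ : X → ℝ} {ν : Y → ℝ} {π : X → Y → ℝ}
    (h : IsCoupling π μ ν) : 0 ≤ OTCost C μ ν := by
  refine le_csInf ⟨_, π, h, rfl⟩ ?_
  rintro t ⟨π', hπ', rfl⟩
  exact transportCost_nonneg hπ'.1 hC

lemma tv_coupling {X : Type*} [Fintype X] [MetricSpace X] (p : ℝ) (hp : 1 ≤ p) (xbar : X)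
    (μ ν : X → ℝ) (hμ0 : ∀ x, 0 ≤ μ x) (hν0 : ∀ x, 0 ≤ ν x)
    (hsum : ∑ x, μ x = ∑ x, ν x) :
    ∃ π, IsCoupling π μ ν ∧ transportCost π (fun x y => dist x y ^ p) ≤
      2 ^ (p - 1) * ∑ x, dist xbar x ^ p * |μ x - ν x| := by
  classical
  have hp0 : (0:ℝ) < p := lt_of_lt_of_le one_pos hp
  set m : X → ℝ := fun x => min (μ x) (ν x) with hm
  set a : X → ℝ := fun x => μ x - m x with hadef
  set b : X → ℝ := fun x => ν x - m x with hbdef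
  have ha : ∀ x, 0 ≤ a x := fun x => sub_nonneg.2 (min_le_left _ _)
  have hb : ∀ x, 0 ≤ b x := fun x => sub_nonneg.2 (min_le_right _ _)
  have hm0 : ∀ x, 0 ≤ m x := fun x => le_min (hμ0 x) (hν0 x)
  have hab : ∀ x, a x + b x = |μ x - ν x| := by
    intro x
    have h1 : max (μ x) (ν x) + min (μ x) (ν x) = μ x + ν x := max_add_min _ _
    have h2 : max (μ x) (ν x) - min (μ x) (ν x) = |ν x - μ x| := max_sub_min_eq_abs _ _
    rw [abs_sub_comm]
    simp only [hadef, hbdef, hm]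
    linarith
  have habs_sum : ∑ x, (a x + b x) = ∑ x, |μ x - ν x| := by
    exact Finset.sum_congr rfl fun x _ => hab x
  set r : ℝ := ∑ x, a x with hrdef
  have hrb : ∑ x, b x = r := by
    simp only [hrdef, hadef, hbdef, Finset.sum_sub_distrib, hsum]
  have hr0 : 0 ≤ r := Finset.sum_nonneg fun x _ => ha x
  have hRHS : 0 ≤ 2 ^ (p - 1) * ∑ x, dist xbar x ^ p * |μ x - ν x| := by
    apply mul_nonneg (Real.rpow_nonneg (by norm_num) _)
    exact Finset.sum_nonneg fun x _ => mul_nonneg (Real.rpow_nonneg dist_nonneg _) (abs_nonneg _)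
  rcases eq_or_lt_of_le hr0 with hr | hr
  · -- r = 0 : μ = ν
    have hax : ∀ x, a x = 0 := by
      intro x
      have := (Finset.sum_eq_zero_iff_of_nonneg (fun x _ => ha x)).1 hr.symm
      exact this x (mem_univ x)
    have hbx : ∀ x, b x = 0 := by
      intro x
      have := (Finset.sum_eq_zero_iff_of_nonneg (fun x _ => hb x)).1 (by rw [hrb, ← hr])
      exact this x (mem_univ x)
    have hμν : ∀ x, μ x = ν x := by
      intro x
      have h1 := hax x; have h2 := hbx x
      simp only [hadef, hbdef, sub_eq_zero] at h1 h2
      rw [h1, h2]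
    refine ⟨fun x y => if x = y then μ x else 0, ⟨?_, ?_, ?_⟩, ?_⟩
    · intro i j; dsimp only; split <;> [exact hμ0 i; exact le_rfl]
    · intro i; simp
    · intro j
      rw [show ∑ i, (fun x y => if x = y then μ x else 0) i j = ∑ i, if i = j then μ i else 0
        from rfl, Finset.sum_ite_eq' Finset.univ j (fun x => μ x)]
      simp [hμν j]
    · have : transportCost (fun x y => if x = y then μ x else 0)
          (fun x y => dist x y ^ p) = 0 := by
        apply Finset.sum_eq_zero; intro i _
        apply Finset.sum_eq_zero; intro j _
        dsimp only
        by_cases h : i = j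
        · subst h; simp [Real.zero_rpow (ne_of_gt hp0)]
        · simp [h]
      rw [this]; exact hRHS
  · -- r > 0
    set π : X → X → ℝ := fun x y => (if x = y then m x else 0) + a x * b y / r with hπdef
    have hπnn : ∀ x y, 0 ≤ π x y := by
      intro x y
      apply add_nonneg
      · split <;> [exact hm0 x; exact le_rfl]
      · exact div_nonneg (mul_nonneg (ha x) (hb y)) hr0
    have hrow : ∀ x, ∑ y, π x y = μ x := by
      intro x
      rw [Finset.sum_add_distrib]
      rw [Finset.sum_ite_eq Finset.univ x (fun _ => m x)]
      have : ∑ y, a x * b y / r = a x := by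
        rw [← Finset.sum_div, ← Finset.mul_sum, hrb, mul_div_assoc, div_self (ne_of_gt hr),
          mul_one]
      simp only [mem_univ, if_true, this]
      simp only [hadef]
      ring
    have hcol : ∀ y, ∑ x, π x y = ν y := by
      intro y
      rw [Finset.sum_add_distrib]
      have h1 : ∑ x, (if x = y then m x else 0) = m y := by
        rw [Finset.sum_ite_eq' Finset.univ y (fun x => m x)]; simp
      have h2 : ∑ x, a x * b y / r = b y := by
        rw [← Finset.sum_div, ← Finset.sum_mul, ← hrdef, mul_comm, mul_div_assoc,
          div_self (ne_of_gt hr), mul_one]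
      rw [h1, h2]; simp only [hbdef]; ring
    refine ⟨π, ⟨hπnn, hrow, hcol⟩, ?_⟩
    set w : X → ℝ := fun x => dist xbar x ^ p with hwdef
    have hw0 : ∀ x, 0 ≤ w x := fun x => Real.rpow_nonneg dist_nonneg _
    have hdiag : ∀ i, ∑ j, (if i = j then m i else 0) * dist i j ^ p = 0 := by
      intro i
      apply Finset.sum_eq_zero; intro j _
      by_cases h : i = j
      · subst h; simp [Real.zero_rpow (ne_of_gt hp0)]
      · simp [h]
    have hcost : transportCost π (fun x y => dist x y ^ p)
        = ∑ i, ∑ j, a i * b j / r * dist i j ^ p := by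
      unfold transportCost
      have expand : ∀ i j, π i j * dist i j ^ p
          = (if i = j then m i else 0) * dist i j ^ p + a i * b j / r * dist i j ^ p := by
        intro i j; simp only [hπdef]; ring
      simp only [expand, Finset.sum_add_distrib, hdiag, zero_add]
    rw [hcost]
    calc ∑ i, ∑ j, a i * b j / r * dist i j ^ p
        ≤ ∑ i, ∑ j, a i * b j / r * (2 ^ (p-1) * (w i + w j)) := by
          apply Finset.sum_le_sum; intro i _
          apply Finset.sum_le_sum; intro j _
          apply mul_le_mul_of_nonneg_left _ (div_nonneg (mul_nonneg (ha i) (hb j)) hr0)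
          calc dist i j ^ p ≤ (dist xbar i + dist xbar j) ^ p := by
                apply Real.rpow_le_rpow dist_nonneg _ (le_of_lt hp0)
                rw [dist_comm xbar i]; exact dist_triangle i xbar j
            _ ≤ 2 ^ (p-1) * (dist xbar i ^ p + dist xbar j ^ p) :=
                two_pow_bound p hp dist_nonneg dist_nonneg
      _ = 2 ^ (p-1) * ∑ x, dist xbar x ^ p * |μ x - ν x| := by
          have expand : ∀ i j, a i * b j / r * (2 ^ (p-1) * (w i + w j))
              = 2 ^ (p-1) / r * ((a i * w i) * b j) + 2 ^ (p-1) / r * (a i * (b j * w j)) := by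
            intro i j; ring
          simp only [expand, Finset.sum_add_distrib, ← Finset.mul_sum]
          simp only [← Finset.sum_mul]
          rw [hrb, ← hrdef]
          have final : ∑ x, dist xbar x ^ p * |μ x - ν x|
              = (∑ i, a i * w i) + (∑ j, b j * w j) := by
            rw [← Finset.sum_add_distrib]
            apply Finset.sum_congr rfl; intro x _
            rw [← hab x, hwdef]; ring
          rw [final]
          field_simp

lemma glue {X : Type*} [Fintype X] [MetricSpace X] (p : ℝ) (hp : 1 ≤ p)
    (μ α β ν : X → ℝ) (π1 π2 π3 : X → X → ℝ)
    (h1 : IsCoupling π1 μ α) (h2 : IsCoupling π2 α β) (h3 : IsCoupling π3 β ν) :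
    Wp p μ ν ≤ (transportCost π1 (fun x y => dist x y ^ p)) ^ (1/p)
      + (transportCost π2 (fun x y => dist x y ^ p)) ^ (1/p)
      + (transportCost π3 (fun x y => dist x y ^ p)) ^ (1/p) := by
  classical
  have hp0 : (0:ℝ) < p := lt_of_lt_of_le one_pos hp
  obtain ⟨h1n, h1r, h1c⟩ := h1
  obtain ⟨h2n, h2r, h2c⟩ := h2
  obtain ⟨h3n, h3r, h3c⟩ := h3
  set inv : ℝ → ℝ := fun t => if t = 0 then 0 else t⁻¹ with hinv
  have cancel1 : ∀ (t c : ℝ), (t = 0 → c = 0) → c * inv t * t = c := by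
    intro t c h
    by_cases ht : t = 0
    · simp [hinv, ht, h ht]
    · simp only [hinv, ht, if_false]
      field_simp
  have cancel2 : ∀ (t c : ℝ), (t = 0 → c = 0) → t * inv t * c = c := by
    intro t c h
    by_cases ht : t = 0
    · simp [hinv, ht, h ht]
    · simp only [hinv, ht, if_false]
      field_simp
  have hinv0 : ∀ t : ℝ, 0 ≤ t → 0 ≤ inv t := by
    intro t ht
    by_cases h : t = 0 <;> simp [hinv, h, inv_nonneg.2 ht]
  have hα0 : ∀ y, 0 ≤ α y := fun y => (h1c y) ▸ Finset.sum_nonneg fun x _ => h1n x y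
  have hβ0 : ∀ z, 0 ≤ β z := fun z => (h2c z) ▸ Finset.sum_nonneg fun y _ => h2n y z
  have z1 : ∀ x y, α y = 0 → π1 x y = 0 := by
    intro x y h
    have := (Finset.sum_eq_zero_iff_of_nonneg (fun i (_ : i ∈ Finset.univ) => h1n i y)).1
      (by rw [h1c y, h])
    exact this x (mem_univ x)
  have z2r : ∀ y z, α y = 0 → π2 y z = 0 := by
    intro y z h
    have := (Finset.sum_eq_zero_iff_of_nonneg (fun j (_ : j ∈ Finset.univ) => h2n y j)).1
      (by rw [h2r y, h])
    exact this z (mem_univ z)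
  have z2c : ∀ y z, β z = 0 → π2 y z = 0 := by
    intro y z h
    have := (Finset.sum_eq_zero_iff_of_nonneg (fun i (_ : i ∈ Finset.univ) => h2n i z)).1
      (by rw [h2c z, h])
    exact this y (mem_univ y)
  have z3 : ∀ z w, β z = 0 → π3 z w = 0 := by
    intro z w h
    have := (Finset.sum_eq_zero_iff_of_nonneg (fun j (_ : j ∈ Finset.univ) => h3n z j)).1
      (by rw [h3r z, h])
    exact this w (mem_univ w)
  set σ : X → X → X → X → ℝ :=
    fun x y z w => π1 x y * inv (α y) * π2 y z * inv (β z) * π3 z w with hσdef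
  have hσ0 : ∀ x y z w, 0 ≤ σ x y z w := by
    intro x y z w
    simp only [hσdef]
    exact mul_nonneg (mul_nonneg (mul_nonneg (mul_nonneg (h1n x y) (hinv0 _ (hα0 y)))
      (h2n y z)) (hinv0 _ (hβ0 z))) (h3n z w)
  -- inner w-sum
  have hW : ∀ x y z, ∑ w, σ x y z w = π1 x y * inv (α y) * π2 y z := by
    intro x y z
    simp only [hσdef]
    rw [← Finset.mul_sum, h3r z]
    exact cancel1 (β z) _ (fun h => by rw [z2c y z h, mul_zero])
  have A1 : ∀ x y, ∑ z, ∑ w, σ x y z w = π1 x y := by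
    intro x y
    simp only [hW]
    rw [← Finset.mul_sum, h2r y]
    exact cancel1 (α y) _ (z1 x y)
  have A2 : ∀ y z, ∑ x, ∑ w, σ x y z w = π2 y z := by
    intro y z
    simp only [hW]
    rw [← Finset.sum_mul, ← Finset.sum_mul, h1c y]
    exact cancel2 (α y) _ (z2r y z)
  have hX : ∀ y z w, ∑ x, σ x y z w = π2 y z * inv (β z) * π3 z w := by
    intro y z w
    simp only [hσdef]
    rw [← Finset.sum_mul, ← Finset.sum_mul, ← Finset.sum_mul, ← Finset.sum_mul, h1c y]
    rw [cancel2 (α y) (π2 y z) (z2r y z)]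
  have A3 : ∀ z w, ∑ x, ∑ y, σ x y z w = π3 z w := by
    intro z w
    rw [Finset.sum_comm]
    simp only [hX]
    rw [← Finset.sum_mul, ← Finset.sum_mul, h2c z]
    exact cancel2 (β z) _ (z3 z w)
  set π : X → X → ℝ := fun x w => ∑ y, ∑ z, σ x y z w with hπdef
  have hπc : IsCoupling π μ ν := by
    refine ⟨?_, ?_, ?_⟩
    · intro x w
      exact Finset.sum_nonneg fun y _ => Finset.sum_nonneg fun z _ => hσ0 x y z w
    · intro x
      calc ∑ w, ∑ y, ∑ z, σ x y z w
          = ∑ y, ∑ w, ∑ z, σ x y z w := Finset.sum_comm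
        _ = ∑ y, ∑ z, ∑ w, σ x y z w := Finset.sum_congr rfl fun y _ => Finset.sum_comm
        _ = ∑ y, π1 x y := Finset.sum_congr rfl fun y _ => A1 x y
        _ = μ x := h1r x
    · intro w
      calc ∑ x, ∑ y, ∑ z, σ x y z w
          = ∑ x, ∑ z, ∑ y, σ x y z w := Finset.sum_congr rfl fun x _ => Finset.sum_comm
        _ = ∑ z, ∑ x, ∑ y, σ x y z w := Finset.sum_comm
        _ = ∑ z, π3 z w := Finset.sum_congr rfl fun z _ => A3 z w
        _ = ν w := h3c w
  set Q := (X × X × X × X)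
  set S : Q → ℝ := fun q => σ q.1 q.2.1 q.2.2.1 q.2.2.2 with hSdef
  have hS0 : ∀ q : Q, 0 ≤ S q := fun q => hσ0 _ _ _ _
  have sum4 : ∀ f : X → X → X → X → ℝ,
      ∑ q : Q, f q.1 q.2.1 q.2.2.1 q.2.2.2 = ∑ x, ∑ y, ∑ z, ∑ w, f x y z w := by
    intro f
    rw [Fintype.sum_prod_type]
    refine Finset.sum_congr rfl fun x _ => ?_
    rw [Fintype.sum_prod_type]
    refine Finset.sum_congr rfl fun y _ => ?_
    rw [Fintype.sum_prod_type]
  have pull : ∀ (f : X → X → ℝ) (c : ℝ), ∑ x, ∑ y, f x y * c = (∑ x, ∑ y, f x y) * c := by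
    intro f c
    rw [Finset.sum_mul]
    exact Finset.sum_congr rfl fun x _ => (Finset.sum_mul _ _ _).symm
  have C0 : transportCost π (fun x y => dist x y ^ p)
      = ∑ q : Q, S q * dist q.1 q.2.2.2 ^ p := by
    set e0 : Q ≃ Q :=
      ⟨fun q => (q.1, q.2.2.2, q.2.1, q.2.2.1), fun q => (q.1, q.2.2.1, q.2.2.2, q.2.1),
        fun q => rfl, fun q => rfl⟩ with he0
    have := Equiv.sum_comp e0 (fun q : Q => σ q.1 q.2.2.1 q.2.2.2 q.2.1 * dist q.1 q.2.1 ^ p)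
    calc transportCost π (fun x y => dist x y ^ p)
        = ∑ x, ∑ w, ∑ y, ∑ z, σ x y z w * dist x w ^ p := by
          unfold transportCost
          refine Finset.sum_congr rfl fun x _ => Finset.sum_congr rfl fun w _ => ?_
          simp only [hπdef, Finset.sum_mul]
      _ = ∑ q : Q, σ q.1 q.2.2.1 q.2.2.2 q.2.1 * dist q.1 q.2.1 ^ p := by
          rw [sum4 (fun x w y z => σ x y z w * dist x w ^ p)]
      _ = ∑ q : Q, S q * dist q.1 q.2.2.2 ^ p := by
          rw [← this]
          refine Finset.sum_congr rfl fun q _ => ?_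
          simp only [he0, Equiv.coe_fn_mk, hSdef]
  have C1 : ∑ q : Q, S q * dist q.1 q.2.1 ^ p = transportCost π1 (fun x y => dist x y ^ p) := by
    calc ∑ q : Q, S q * dist q.1 q.2.1 ^ p
        = ∑ x, ∑ y, ∑ z, ∑ w, σ x y z w * dist x y ^ p :=
          sum4 (fun x y z w => σ x y z w * dist x y ^ p)
      _ = transportCost π1 (fun x y => dist x y ^ p) := by
          unfold transportCost
          refine Finset.sum_congr rfl fun x _ => Finset.sum_congr rfl fun y _ => ?_
          rw [pull (fun z w => σ x y z w) (dist x y ^ p), A1 x y]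
  have C2 : ∑ q : Q, S q * dist q.2.1 q.2.2.1 ^ p
      = transportCost π2 (fun x y => dist x y ^ p) := by
    set e2 : Q ≃ Q :=
      ⟨fun q => (q.2.1, q.2.2.1, q.1, q.2.2.2), fun q => (q.2.2.1, q.1, q.2.1, q.2.2.2),
        fun q => rfl, fun q => rfl⟩ with he2
    have h := Equiv.sum_comp e2 (fun q : Q => σ q.2.2.1 q.1 q.2.1 q.2.2.2 * dist q.1 q.2.1 ^ p)
    calc ∑ q : Q, S q * dist q.2.1 q.2.2.1 ^ p
        = ∑ q : Q, σ q.2.2.1 q.1 q.2.1 q.2.2.2 * dist q.1 q.2.1 ^ p := by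
          rw [← h]
          exact Finset.sum_congr rfl fun q _ => by simp only [he2, Equiv.coe_fn_mk, hSdef]
      _ = ∑ y, ∑ z, ∑ x, ∑ w, σ x y z w * dist y z ^ p :=
          sum4 (fun y z x w => σ x y z w * dist y z ^ p)
      _ = transportCost π2 (fun x y => dist x y ^ p) := by
          unfold transportCost
          refine Finset.sum_congr rfl fun y _ => Finset.sum_congr rfl fun z _ => ?_
          rw [pull (fun x w => σ x y z w) (dist y z ^ p), A2 y z]
  have C3 : ∑ q : Q, S q * dist q.2.2.1 q.2.2.2 ^ p
      = transportCost π3 (fun x y => dist x y ^ p) := by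
    set e3 : Q ≃ Q :=
      ⟨fun q => (q.2.2.1, q.2.2.2, q.1, q.2.1), fun q => (q.2.2.1, q.2.2.2, q.1, q.2.1),
        fun q => rfl, fun q => rfl⟩ with he3
    have h := Equiv.sum_comp e3 (fun q : Q => σ q.2.2.1 q.2.2.2 q.1 q.2.1 * dist q.1 q.2.1 ^ p)
    calc ∑ q : Q, S q * dist q.2.2.1 q.2.2.2 ^ p
        = ∑ q : Q, σ q.2.2.1 q.2.2.2 q.1 q.2.1 * dist q.1 q.2.1 ^ p := by
          rw [← h]
          exact Finset.sum_congr rfl fun q _ => by simp only [he3, Equiv.coe_fn_mk, hSdef]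
      _ = ∑ z, ∑ w, ∑ x, ∑ y, σ x y z w * dist z w ^ p :=
          sum4 (fun z w x y => σ x y z w * dist z w ^ p)
      _ = transportCost π3 (fun x y => dist x y ^ p) := by
          unfold transportCost
          refine Finset.sum_congr rfl fun z _ => Finset.sum_congr rfl fun w _ => ?_
          rw [pull (fun x y => σ x y z w) (dist z w ^ p), A3 z w]
  have hC0 : ∀ (i j : X), (0:ℝ) ≤ dist i j ^ p := fun i j => Real.rpow_nonneg dist_nonneg _
  set F1 : Q → ℝ := fun q => S q ^ (1/p) * dist q.1 q.2.1 with hF1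
  set F2 : Q → ℝ := fun q => S q ^ (1/p) * dist q.2.1 q.2.2.1 with hF2
  set F3 : Q → ℝ := fun q => S q ^ (1/p) * dist q.2.2.1 q.2.2.2 with hF3
  have hF1n : ∀ q : Q, 0 ≤ F1 q :=
    fun q => mul_nonneg (Real.rpow_nonneg (hS0 q) _) dist_nonneg
  have hF2n : ∀ q : Q, 0 ≤ F2 q :=
    fun q => mul_nonneg (Real.rpow_nonneg (hS0 q) _) dist_nonneg
  have hF3n : ∀ q : Q, 0 ≤ F3 q :=
    fun q => mul_nonneg (Real.rpow_nonneg (hS0 q) _) dist_nonneg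
  have hpow : ∀ (q : Q) (t : ℝ), 0 ≤ t → (S q ^ (1/p) * t) ^ p = S q * t ^ p := by
    intro q t ht
    rw [Real.mul_rpow (Real.rpow_nonneg (hS0 q) _) ht, ← Real.rpow_mul (hS0 q),
      one_div_mul_cancel (ne_of_gt hp0), Real.rpow_one]
  have key1 : ∀ q : Q, S q * dist q.1 q.2.2.2 ^ p ≤ (F1 q + F2 q + F3 q) ^ p := by
    intro q
    have hd : dist q.1 q.2.2.2
        ≤ dist q.1 q.2.1 + dist q.2.1 q.2.2.1 + dist q.2.2.1 q.2.2.2 :=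
      dist_triangle4 _ _ _ _
    calc S q * dist q.1 q.2.2.2 ^ p
        ≤ S q * (dist q.1 q.2.1 + dist q.2.1 q.2.2.1 + dist q.2.2.1 q.2.2.2) ^ p :=
          mul_le_mul_of_nonneg_left
            (Real.rpow_le_rpow dist_nonneg hd (le_of_lt hp0)) (hS0 q)
      _ = (S q ^ (1/p) * (dist q.1 q.2.1 + dist q.2.1 q.2.2.1 + dist q.2.2.1 q.2.2.2)) ^ p :=
          (hpow q _ (by positivity)).symm
      _ = (F1 q + F2 q + F3 q) ^ p := by
          congr 1
          simp only [hF1, hF2, hF3]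
          ring
  have E1 : ∑ q : Q, F1 q ^ p = transportCost π1 (fun x y => dist x y ^ p) := by
    rw [← C1]
    exact Finset.sum_congr rfl fun q _ => hpow q _ dist_nonneg
  have E2 : ∑ q : Q, F2 q ^ p = transportCost π2 (fun x y => dist x y ^ p) := by
    rw [← C2]
    exact Finset.sum_congr rfl fun q _ => hpow q _ dist_nonneg
  have E3 : ∑ q : Q, F3 q ^ p = transportCost π3 (fun x y => dist x y ^ p) := by
    rw [← C3]
    exact Finset.sum_congr rfl fun q _ => hpow q _ dist_nonneg
  have mink := Real.Lp_add_le_of_nonneg (s := (Finset.univ : Finset Q))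
    (f := fun q => F1 q + F2 q) (g := F3) hp
    (fun q _ => add_nonneg (hF1n q) (hF2n q)) (fun q _ => hF3n q)
  have mink2 := Real.Lp_add_le_of_nonneg (s := (Finset.univ : Finset Q))
    (f := F1) (g := F2) hp (fun q _ => hF1n q) (fun q _ => hF2n q)
  have hsum_nonneg : 0 ≤ ∑ q : Q, S q * dist q.1 q.2.2.2 ^ p :=
    Finset.sum_nonneg fun q _ => mul_nonneg (hS0 q) (hC0 _ _)
  calc Wp p μ ν
      = (OTCost (fun x y => dist x y ^ p) μ ν) ^ (1/p) := rfl
    _ ≤ (transportCost π (fun x y => dist x y ^ p)) ^ (1/p) :=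
        Real.rpow_le_rpow (OTCost_nonneg hC0 hπc) (OTCost_le hC0 hπc) (by positivity)
    _ = (∑ q : Q, S q * dist q.1 q.2.2.2 ^ p) ^ (1/p) := by rw [C0]
    _ ≤ (∑ q : Q, (F1 q + F2 q + F3 q) ^ p) ^ (1/p) :=
        Real.rpow_le_rpow hsum_nonneg (Finset.sum_le_sum fun q _ => key1 q) (by positivity)
    _ ≤ (∑ q : Q, (F1 q + F2 q) ^ p) ^ (1/p) + (∑ q : Q, F3 q ^ p) ^ (1/p) := mink
    _ ≤ ((∑ q : Q, F1 q ^ p) ^ (1/p) + (∑ q : Q, F2 q ^ p) ^ (1/p))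
        + (∑ q : Q, F3 q ^ p) ^ (1/p) := add_le_add mink2 le_rfl
    _ = (transportCost π1 (fun x y => dist x y ^ p)) ^ (1/p)
        + (transportCost π2 (fun x y => dist x y ^ p)) ^ (1/p)
        + (transportCost π3 (fun x y => dist x y ^ p)) ^ (1/p) := by
        rw [E1, E2, E3]

theorem coarse_to_fine_upper_bound
    {X : Type*} [Fintype X] [MetricSpace X] (p : ℝ) (hp : 1 ≤ p) (xbar : X)
    (μ ν : X → ℝ)
    (hμ : (∀ x, 0 ≤ μ x) ∧ ∑ x, μ x = 1)
    (hν : (∀ x, 0 ≤ ν x) ∧ ∑ x, ν x = 1)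
    (πhat : X → X → ℝ)
    (hπ : (∀ x y, 0 ≤ πhat x y) ∧ ∑ x, ∑ y, πhat x y = 1)
    (μhat νhat : X → ℝ)
    (hμhat : ∀ x, μhat x = ∑ y, πhat x y)
    (hνhat : ∀ y, νhat y = ∑ x, πhat x y) :
    Wp p μ ν ≤ (transportCost πhat (fun x y => dist x y ^ p)) ^ (1 / p)
      + 2 ^ (1 - 1 / p) * (∑ x, dist xbar x ^ p * |μhat x - μ x|) ^ (1 / p)
      + 2 ^ (1 - 1 / p) * (∑ x, dist xbar x ^ p * |ν x - νhat x|) ^ (1 / p) := by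
  classical
  obtain ⟨hμ0, hμ1⟩ := hμ
  obtain ⟨hν0, hν1⟩ := hν
  obtain ⟨hπ0, hπ1⟩ := hπ
  have hp0 : (0:ℝ) < p := lt_of_lt_of_le one_pos hp
  have hC : ∀ (i j : X), (0:ℝ) ≤ dist i j ^ p := fun i j => Real.rpow_nonneg dist_nonneg _
  have hμhat0 : ∀ x, 0 ≤ μhat x := fun x =>
    (hμhat x) ▸ Finset.sum_nonneg fun y _ => hπ0 x y
  have hνhat0 : ∀ y, 0 ≤ νhat y := fun y =>
    (hνhat y) ▸ Finset.sum_nonneg fun x _ => hπ0 x y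
  have hμhat1 : ∑ x, μhat x = 1 := by
    simp only [hμhat]; exact hπ1
  have hνhat1 : ∑ y, νhat y = 1 := by
    simp only [hνhat]; rw [Finset.sum_comm]; exact hπ1
  obtain ⟨π1, hc1, hb1⟩ := tv_coupling p hp xbar μ μhat hμ0 hμhat0 (by rw [hμ1, hμhat1])
  obtain ⟨π3, hc3, hb3⟩ := tv_coupling p hp xbar νhat ν hνhat0 hν0 (by rw [hνhat1, hν1])
  have hc2 : IsCoupling πhat μhat νhat :=
    ⟨hπ0, fun i => (hμhat i).symm, fun j => (hνhat j).symm⟩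
  have main := glue p hp μ μhat νhat ν π1 πhat π3 hc1 hc2 hc3
  have pow_combine : ∀ T : ℝ, 0 ≤ T → (2 ^ (p-1) * T) ^ (1/p) = 2 ^ (1 - 1/p) * T ^ (1/p) := by
    intro T hT
    rw [Real.mul_rpow (by positivity) hT, ← Real.rpow_mul (by norm_num : (0:ℝ) ≤ 2)]
    congr 1
    field_simp
  have term1 : (transportCost π1 (fun x y => dist x y ^ p)) ^ (1/p)
      ≤ 2 ^ (1 - 1/p) * (∑ x, dist xbar x ^ p * |μhat x - μ x|) ^ (1/p) := by
    have hswap : ∑ x, dist xbar x ^ p * |μ x - μhat x|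
        = ∑ x, dist xbar x ^ p * |μhat x - μ x| :=
      Finset.sum_congr rfl fun x _ => by rw [abs_sub_comm]
    have hT0 : 0 ≤ ∑ x, dist xbar x ^ p * |μhat x - μ x| :=
      Finset.sum_nonneg fun x _ => mul_nonneg (hC _ _) (abs_nonneg _)
    have h : (transportCost π1 (fun x y => dist x y ^ p)) ^ (1/p)
        ≤ (2 ^ (p-1) * ∑ x, dist xbar x ^ p * |μ x - μhat x|) ^ (1/p) :=
      Real.rpow_le_rpow (transportCost_nonneg hc1.1 hC) hb1 (by positivity)
    rw [hswap, pow_combine _ hT0] at h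
    exact h
  have term3 : (transportCost π3 (fun x y => dist x y ^ p)) ^ (1/p)
      ≤ 2 ^ (1 - 1/p) * (∑ x, dist xbar x ^ p * |ν x - νhat x|) ^ (1/p) := by
    have hswap : ∑ x, dist xbar x ^ p * |νhat x - ν x|
        = ∑ x, dist xbar x ^ p * |ν x - νhat x| :=
      Finset.sum_congr rfl fun x _ => by rw [abs_sub_comm]
    have hT0 : 0 ≤ ∑ x, dist xbar x ^ p * |ν x - νhat x| :=
      Finset.sum_nonneg fun x _ => mul_nonneg (hC _ _) (abs_nonneg _)
    have h : (transportCost π3 (fun x y => dist x y ^ p)) ^ (1/p)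
        ≤ (2 ^ (p-1) * ∑ x, dist xbar x ^ p * |νhat x - ν x|) ^ (1/p) :=
      Real.rpow_le_rpow (transportCost_nonneg hc3.1 hC) hb3 (by positivity)
    rw [hswap, pow_combine _ hT0] at h
    exact h
  linarith [main, term1, term3]
end
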